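/- Let φ: H → (-∞,+∞] be proper and lower semicontinuous on a separable Hilbert space H. Then for every u ∈ H, ξ belongs to the weak limiting subdifferential ∂_ℓ φ(u) if and only if there exist sequences u_k → u strongly, ξ_k ⇀ ξ weakly, with sup_k φ(u_k) < +∞ and ξ_k ∈ ∂_s φ(u_k) for all k; i.e., ∂_ℓ φ is the sequential strong–weak closure of the strong limiting subdifferential ∂_s φ along sequences with bounded energy. -/

import Mathlib

open Filter

/-- The Fréchet subdifferential of `φ` at `v`. -/
def frechetSubdiff {H : Type*} [NormedAddCommGroup H] [InnerProductSpace ℝ H]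
    (φ : H → EReal) (v : H) : Set H :=
  {ξ : H | φ v < ⊤ ∧ ∀ ε : ℝ, 0 < ε → ∀ᶠ w in nhds v,
      φ v + (((inner ℝ ξ (w - v) : ℝ) - ε * ‖w - v‖ : ℝ) : EReal) ≤ φ w}

/-- The strong limiting subdifferential `∂ₛφ(v)`. -/
def strongLimSubdiff {H : Type*} [NormedAddCommGroup H] [InnerProductSpace ℝ H]
    (φ : H → EReal) (v : H) : Set H :=
  {ξ : H | ∃ vn ξn : ℕ → H,
      (∀ n, ξn n ∈ frechetSubdiff φ (vn n)) ∧
      Tendsto vn atTop (nhds v) ∧ Tendsto ξn atTop (nhds ξ) ∧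
      Tendsto (fun n => φ (vn n)) atTop (nhds (φ v))}

/-- The weak limiting subdifferential `∂ₗφ(v)`: sequences `vₙ → v` strongly,
`ξₙ ⇀ ξ` weakly, `ξₙ ∈ ∂φ(vₙ)` (Fréchet), with `sup_n φ(vₙ) < +∞`. -/
def weakLimSubdiff {H : Type*} [NormedAddCommGroup H] [InnerProductSpace ℝ H]
    (φ : H → EReal) (v : H) : Set H :=
  {ξ : H | ∃ vn ξn : ℕ → H,
      (∀ n, ξn n ∈ frechetSubdiff φ (vn n)) ∧
      Tendsto vn atTop (nhds v) ∧
      (∀ y : H, Tendsto (fun n => (inner ℝ (ξn n) y : ℝ)) atTop (nhds (inner ℝ ξ y))) ∧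
      ∃ C : ℝ, ∀ n, φ (vn n) ≤ (C : EReal)}

lemma frechet_subset_strong {H : Type*} [NormedAddCommGroup H] [InnerProductSpace ℝ H]
    (φ : H → EReal) (v ξ : H) (h : ξ ∈ frechetSubdiff φ v) : ξ ∈ strongLimSubdiff φ v :=
  ⟨fun _ => v, fun _ => ξ, fun _ => h, tendsto_const_nhds, tendsto_const_nhds,
    tendsto_const_nhds⟩

/-- The weak limiting subdifferential is the sequential strong–weak closure of
the strong limiting subdifferential along sequences with bounded energy. -/
theorem weakLimSubdiff_eq_closure_strongLimSubdiff {H : Type*}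
    [NormedAddCommGroup H] [InnerProductSpace ℝ H]
    [TopologicalSpace.SeparableSpace H]
    (φ : H → EReal) (hproper : ∃ w, φ w ≠ ⊤) (hnbot : ∀ w, φ w ≠ ⊥)
    (hlsc : LowerSemicontinuous φ) :
    ∀ (u ξ : H), ξ ∈ weakLimSubdiff φ u ↔
      ∃ uk ξk : ℕ → H,
        (∀ k, ξk k ∈ strongLimSubdiff φ (uk k)) ∧
        Tendsto uk atTop (nhds u) ∧
        (∀ y : H, Tendsto (fun k => (inner ℝ (ξk k) y : ℝ)) atTop (nhds (inner ℝ ξ y))) ∧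
        ∃ C : ℝ, ∀ k, φ (uk k) ≤ (C : EReal) := by
  intro u ξ
  constructor
  · rintro ⟨vn, ξn, hF, hv, hw, C, hC⟩
    exact ⟨vn, ξn, fun n => frechet_subset_strong φ _ _ (hF n), hv, hw, C, hC⟩
  · rintro ⟨uk, ξk, hS, hu, hw, C, hC⟩
    choose vkn ξkn hFk hvk hξk hφk using hS
    have hsel : ∀ k : ℕ, ∃ n, ‖vkn k n - uk k‖ < 1/(k+1) ∧ ‖ξkn k n - ξk k‖ < 1/(k+1) ∧
        φ (vkn k n) < ((C+1 : ℝ) : EReal) := by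
      intro k
      have hpos : (0:ℝ) < 1/(k+1) := by positivity
      have h1 : ∀ᶠ n in atTop, ‖vkn k n - uk k‖ < 1/(k+1) := by
        have := (hvk k).eventually (Metric.ball_mem_nhds (uk k) hpos)
        simpa [Metric.mem_ball, dist_eq_norm] using this
      have h2 : ∀ᶠ n in atTop, ‖ξkn k n - ξk k‖ < 1/(k+1) := by
        have := (hξk k).eventually (Metric.ball_mem_nhds (ξk k) hpos)
        simpa [Metric.mem_ball, dist_eq_norm] using this
      have hlt : φ (uk k) < ((C+1:ℝ) : EReal) :=
        lt_of_le_of_lt (hC k) (by exact_mod_cast lt_add_one C)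
      have h3 : ∀ᶠ n in atTop, φ (vkn k n) < ((C+1:ℝ):EReal) :=
        (hφk k).eventually_lt_const hlt
      exact (((h1.and h2).and h3).exists).imp (fun n h => ⟨h.1.1, h.1.2, h.2⟩)
    choose N hN1 hN2 hN3 using hsel
    refine ⟨fun k => vkn k (N k), fun k => ξkn k (N k), fun k => hFk k (N k), ?_, ?_,
      C+1, fun k => (hN3 k).le⟩
    · have hdiff : Tendsto (fun k : ℕ => vkn k (N k) - uk k) atTop (nhds 0) :=
        squeeze_zero_norm (fun k => (hN1 k).le) tendsto_one_div_add_atTop_nhds_zero_nat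
      have := hdiff.add hu
      simpa using this
    · intro y
      have hz : Tendsto (fun k : ℕ => (inner ℝ (ξkn k (N k) - ξk k) y : ℝ)) atTop (nhds 0) := by
        have hg : Tendsto (fun k : ℕ => ‖y‖ * (1/(k+1))) atTop (nhds 0) := by
          simpa using tendsto_one_div_add_atTop_nhds_zero_nat.const_mul ‖y‖
        refine squeeze_zero_norm (fun k => ?_) hg
        calc ‖(inner ℝ (ξkn k (N k) - ξk k) y : ℝ)‖
            ≤ ‖ξkn k (N k) - ξk k‖ * ‖y‖ := norm_inner_le_norm _ _
          _ ≤ (1/(k+1)) * ‖y‖ := by gcongr; exact (hN2 k).le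
          _ = ‖y‖ * (1/(k+1)) := mul_comm _ _
      have h := (hw y).add hz
      simp only [inner_sub_left] at h
      simpa using h
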